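/- If a bivariate function T : [0,1)² → (0,1] satisfies 2-Goodness with threshold F, and X, Y are independent uniform random variables on (0,1), then E[V₁·V₂] = 1, where V₁ = (1/T(X,Y))·[X < T(X,Y)] and V₂ = (1/T(X,Y))·[Y < T(X,Y)]. -/

import Mathlib

open MeasureTheory

lemma aux_indicator_int (F c : ℝ) (hF0 : 0 < F) (hF1 : F ≤ 1) :
    ∫ y in Set.Ioo (0:ℝ) 1, (if y < F then c else 0) = F * c := by
  have : (fun y : ℝ => if y < F then c else 0)
      = Set.indicator (Set.Iio F) (fun _ => c) := by
    funext y; simp [Set.indicator, Set.mem_Iio]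
  rw [this, setIntegral_indicator measurableSet_Iio]
  have hinter : Set.Ioo (0:ℝ) 1 ∩ Set.Iio F = Set.Ioo 0 F := by
    ext y
    constructor
    · rintro ⟨⟨h1, _⟩, h3⟩; exact ⟨h1, h3⟩
    · rintro ⟨h1, h2⟩; exact ⟨⟨h1, lt_of_lt_of_le h2 hF1⟩, h2⟩
  rw [hinter, setIntegral_const]
  simp [Real.volume_Ioo, ENNReal.toReal_ofReal hF0.le, hF0.le]

/-- If `T` satisfies 2-Goodness with threshold `F` and `X, Y` are independent
uniforms on `(0,1)`, then `E[V₁·V₂] = 1` where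
`V₁ = (1/T(X,Y))·[X < T(X,Y)]` and `V₂ = (1/T(X,Y))·[Y < T(X,Y)]`. -/
theorem stmt7 (T : ℝ → ℝ → ℝ) (F : ℝ) (hF : F ∈ Set.Ioc (0:ℝ) 1)
    (hgood : ∀ x ∈ Set.Ico (0:ℝ) 1, ∀ y ∈ Set.Ico (0:ℝ) 1,
      (max x y < F → T x y = F) ∧ (F ≤ max x y → T x y ≤ max x y)) :
    ∫ x in Set.Ioo (0:ℝ) 1, ∫ y in Set.Ioo (0:ℝ) 1,
      (if x < T x y then 1 / T x y else 0) *
      (if y < T x y then 1 / T x y else 0) = 1 := by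
  obtain ⟨hF0, hF1⟩ := hF
  have key : ∀ x ∈ Set.Ioo (0:ℝ) 1, ∀ y ∈ Set.Ioo (0:ℝ) 1,
      (if x < T x y then 1 / T x y else 0) *
      (if y < T x y then 1 / T x y else 0)
        = if max x y < F then 1 / F ^ 2 else 0 := by
    intro x hx y hy
    obtain ⟨h1, h2⟩ := hgood x ⟨hx.1.le, hx.2⟩ y ⟨hy.1.le, hy.2⟩
    by_cases hm : max x y < F
    · have hT : T x y = F := h1 hm
      have hxF : x < F := lt_of_le_of_lt (le_max_left x y) hm
      have hyF : y < F := lt_of_le_of_lt (le_max_right x y) hm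
      rw [hT, if_pos hxF, if_pos hyF, if_pos hm]
      ring
    · push_neg at hm
      have hT : T x y ≤ max x y := h2 hm
      rw [if_neg (not_lt.2 hm)]
      rcases max_cases x y with ⟨hmx, _⟩ | ⟨hmy, _⟩
      · rw [if_neg (not_lt.2 (hT.trans hmx.le)), zero_mul]
      · rw [if_neg (not_lt.2 (hT.trans hmy.le)), mul_zero]
  have inner : ∀ x ∈ Set.Ioo (0:ℝ) 1,
      (∫ y in Set.Ioo (0:ℝ) 1,
        (if x < T x y then 1 / T x y else 0) *
        (if y < T x y then 1 / T x y else 0))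
      = if x < F then 1 / F else 0 := by
    intro x hx
    have := setIntegral_congr_fun (μ := volume) measurableSet_Ioo
      (fun y hy => key x hx y hy)
    rw [this]
    by_cases hxF : x < F
    · have : ∀ y : ℝ, (if max x y < F then 1 / F ^ 2 else 0)
          = if y < F then 1 / F ^ 2 else 0 := by
        intro y; simp [max_lt_iff, hxF]
      simp_rw [this]
      rw [aux_indicator_int F (1 / F ^ 2) hF0 hF1, if_pos hxF]
      field_simp
    · have : ∀ y : ℝ, (if max x y < F then 1 / F ^ 2 else 0) = (0:ℝ) := by
        intro y
        rw [if_neg]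
        simp [max_lt_iff, hxF]
      simp_rw [this]
      simp [hxF]
  rw [setIntegral_congr_fun (μ := volume) measurableSet_Ioo inner,
    aux_indicator_int F (1 / F) hF0 hF1]
  field_simp
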